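/- Let τ > 1 and let z_in ∈ [0, 1/τ). Then there exists a unique z_out ∈ (1/τ, 1) such that ∫_{z_in}^{z_out} (τ z − 1)/(1 − z) dz = 0. In particular, the exit point z_out given by the entry–exit function is strictly smaller than 1 for every z_in ∈ [0, 1/τ). -/

import Mathlib

open Real Set

private noncomputable def H15 (τ : ℝ) : ℝ → ℝ := fun x => -τ * x - (τ - 1) * Real.log (1 - x)

private lemma hasD15 (τ : ℝ) {x : ℝ} (hx : x ≠ 1) :
    HasDerivAt (H15 τ) ((τ * x - 1) / (1 - x)) x := by
  have h0 : (1 : ℝ) - x ≠ 0 := sub_ne_zero.2 (Ne.symm hx)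
  have h1 : HasDerivAt (fun y : ℝ => 1 - y) (-1) x := by
    simpa using (hasDerivAt_id x).const_sub 1
  have h2 : HasDerivAt (fun y : ℝ => Real.log (1 - y)) ((1 - x)⁻¹ * -1) x :=
    (Real.hasDerivAt_log h0).comp x h1
  have h3 : HasDerivAt (fun y : ℝ => -τ * y) (-τ) x := by
    simpa using (hasDerivAt_id x).const_mul (-τ)
  have := h3.sub (h2.const_mul (τ - 1))
  refine this.congr_deriv ?_
  field_simp
  ring

private lemma contOn15 (τ : ℝ) {s : Set ℝ} (hs : ∀ x ∈ s, x ≠ 1) :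
    ContinuousOn (fun z => (τ * z - 1) / (1 - z)) s := by
  apply ContinuousOn.div
  · fun_prop
  · fun_prop
  · intro x hx
    exact sub_ne_zero.2 (Ne.symm (hs x hx))

private lemma integral_eq15 (τ a b : ℝ) (ha : a < 1) (hb : b < 1) :
    (∫ z in a..b, (τ * z - 1) / (1 - z)) = H15 τ b - H15 τ a := by
  have hsub : uIcc a b ⊆ Iio 1 := fun x hx =>
    lt_of_le_of_lt hx.2 (max_lt ha hb)
  have h1 : ∀ x ∈ uIcc a b, x ≠ 1 := fun x hx => ne_of_lt (hsub hx)
  exact intervalIntegral.integral_eq_sub_of_hasDerivAt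
    (fun x hx => hasD15 τ (h1 x hx))
    ((contOn15 τ h1).intervalIntegrable)

theorem stmt_15 (τ : ℝ) (hτ : 1 < τ) (zin : ℝ) (hzin : zin ∈ Set.Ico 0 (1 / τ)) :
    ∃! zout : ℝ, zout ∈ Set.Ioo (1 / τ) 1 ∧
      (∫ z in zin..zout, (τ * z - 1) / (1 - z)) = 0 := by
  obtain ⟨hzin0, hzinτ⟩ := hzin
  have hτ0 : (0 : ℝ) < τ := lt_trans one_pos hτ
  have hτ1 : (0 : ℝ) < τ - 1 := sub_pos.2 hτ
  have h1τ1 : 1 / τ < 1 := (div_lt_one hτ0).2 hτ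
  have h1τ0 : 0 < 1 / τ := by positivity
  have hzin1 : zin < 1 := lt_trans hzinτ h1τ1
  have hzin1' : (0:ℝ) < 1 - zin := sub_pos.2 hzin1
  set t : ℝ := (τ + 1) / (τ - 1) with ht
  set x₁ : ℝ := 1 - (1 - zin) * Real.exp (-t) with hx₁
  have hx₁lt1 : x₁ < 1 := by
    have : 0 < (1 - zin) * Real.exp (-t) := by positivity
    linarith
  have hexp : Real.exp (-t) < (τ - 1) / τ := by
    have h1 : τ / (τ - 1) < Real.exp t := by
      have h2 : τ / (τ - 1) < t + 1 := by
        rw [ht, div_add' _ _ _ (ne_of_gt hτ1), div_lt_div_iff_of_pos_right hτ1]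
        nlinarith
      exact lt_of_lt_of_le h2 (Real.add_one_le_exp t)
    rw [Real.exp_neg]
    rw [inv_lt_comm₀ (Real.exp_pos t) (by positivity)] at *
    · rwa [inv_div]
  have hx₁gt : 1 / τ < x₁ := by
    have h1 : (1 - zin) * Real.exp (-t) ≤ Real.exp (-t) := by
      nlinarith [Real.exp_pos (-t), hzin0]
    have h2 : (1 - zin) * Real.exp (-t) < (τ - 1) / τ := lt_of_le_of_lt h1 hexp
    have h3 : (τ - 1) / τ = 1 - 1 / τ := by field_simp
    rw [hx₁]; linarith [h3 ▸ h2]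
  -- continuity of H15 away from 1
  have contH : ∀ s : Set ℝ, (∀ x ∈ s, x ≠ 1) → ContinuousOn (H15 τ) s := by
    intro s hs x hx
    exact ((hasD15 τ (hs x hx)).continuousAt).continuousWithinAt
  have derivH : ∀ x : ℝ, x ≠ 1 → deriv (H15 τ) x = (τ * x - 1) / (1 - x) :=
    fun x hx => (hasD15 τ hx).deriv
  -- strict anti on [zin, 1/τ]
  have Hanti : StrictAntiOn (H15 τ) (Icc zin (1 / τ)) := by
    apply strictAntiOn_of_deriv_neg (convex_Icc _ _)
      (contH _ (fun x hx => ne_of_lt (lt_of_le_of_lt hx.2 h1τ1)))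
    intro x hx
    rw [interior_Icc] at hx
    rw [derivH x (ne_of_lt (lt_trans hx.2 h1τ1))]
    apply div_neg_of_neg_of_pos
    · have : τ * x < 1 := by
        have := hx.2
        calc τ * x < τ * (1 / τ) := by exact mul_lt_mul_of_pos_left this hτ0
        _ = 1 := by field_simp
      linarith
    · have : x < 1 := lt_trans hx.2 h1τ1
      linarith
  -- strict mono on [1/τ, 1)
  have Hmono : StrictMonoOn (H15 τ) (Ico (1 / τ) 1) := by
    apply strictMonoOn_of_deriv_pos (convex_Ico _ _)
      (contH _ (fun x hx => ne_of_lt hx.2))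
    intro x hx
    rw [interior_Ico] at hx
    rw [derivH x (ne_of_lt hx.2)]
    apply div_pos
    · have : 1 < τ * x := by
        have := hx.1
        calc (1:ℝ) = τ * (1 / τ) := by field_simp
        _ < τ * x := mul_lt_mul_of_pos_left this hτ0
      linarith
    · linarith [hx.2]
  -- value at x₁
  have hval : H15 τ x₁ - H15 τ zin = -τ * (x₁ - zin) + (τ + 1) := by
    have hlog : Real.log (1 - x₁) = Real.log (1 - zin) + (-t) := by
      rw [hx₁]
      have : (1:ℝ) - (1 - (1 - zin) * Real.exp (-t)) = (1 - zin) * Real.exp (-t) := by ring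
      rw [this, Real.log_mul (ne_of_gt hzin1') (Real.exp_ne_zero _), Real.log_exp]
    have hc : (τ - 1) * t = τ + 1 := by
      rw [ht]; field_simp
    simp only [H15, hlog]
    nlinarith [hc]
  have hx₁pos : H15 τ zin < H15 τ x₁ := by
    have h1 : x₁ - zin < 1 := by
      have : 0 < (1 - zin) * Real.exp (-t) := by positivity
      rw [hx₁]; linarith
    nlinarith [hval]
  have hmid : H15 τ (1 / τ) < H15 τ zin :=
    Hanti (left_mem_Icc.2 (le_of_lt hzinτ)) (right_mem_Icc.2 (le_of_lt hzinτ)) hzinτ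
  -- IVT
  have hcont : ContinuousOn (H15 τ) (Icc (1 / τ) x₁) :=
    contH _ (fun x hx => ne_of_lt (lt_of_le_of_lt hx.2 hx₁lt1))
  have := intermediate_value_Ioo (le_of_lt hx₁gt) hcont
  obtain ⟨c, hc, hceq⟩ := this ⟨hmid, hx₁pos⟩
  have hc1 : c ∈ Ioo (1 / τ) 1 := ⟨hc.1, lt_trans hc.2 hx₁lt1⟩
  refine ⟨c, ⟨hc1, ?_⟩, ?_⟩
  · rw [integral_eq15 τ zin c hzin1 hc1.2, hceq]; ring
  · rintro y ⟨hy, hyint⟩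
    have hyeq : H15 τ y = H15 τ zin := by
      rw [integral_eq15 τ zin y hzin1 hy.2] at hyint
      linarith
    exact Hmono.injOn ⟨le_of_lt hy.1, hy.2⟩ ⟨le_of_lt hc1.1, hc1.2⟩
      (by rw [hyeq, hceq])
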